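/- arXiv:1704.03237 — 3 statements merged into one kernel-verified Lean document; each statement's English description precedes it below -/
import Mathlib

section
/- Let A be a unital, not necessarily commutative ring, let m ∈ A, and let e₁,…,e_s ∈ A be a complete set of orthogonal idempotents. If the commutator [m, e₁] = m·e₁ − e₁·m commutes with e_i for every i = 1,…,s, then [m, e₁] = 0. -/
/-- Lemma 1.7: if `m ∈ A` and `e 0, …, e s` is a complete set of orthogonal idempotents
such that the commutator `[m, e 0]` commutes with every `e i`, then `[m, e 0] = 0`. -/
theorem commutator_of_idempotent_eq_zero
    {A : Type*} [Ring A] (m : A)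
    (s : ℕ) (e : Fin (s + 1) → A)
    (hidem : ∀ i, e i * e i = e i)
    (horth : ∀ i j, i ≠ j → e i * e j = 0)
    (hcomplete : ∑ i, e i = 1)
    (hcomm : ∀ i, Commute (m * e 0 - e 0 * m) (e i)) :
    m * e 0 - e 0 * m = 0 := by
  set c := m * e 0 - e 0 * m with hcdef
  have he := hidem 0
  have hc := (hcomm 0).eq
  have h0 : e 0 * c * e 0 = 0 := by
    have h' : e 0 * c * e 0 = e 0 * m * (e 0 * e 0) - (e 0 * e 0) * (m * e 0) := by
      rw [hcdef]; noncomm_ring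
    rw [h', he]; noncomm_ring
  have hce : c * e 0 = 0 := by
    calc c * e 0 = c * e 0 * e 0 := by rw [mul_assoc, he]
    _ = e 0 * c * e 0 := by rw [hc]
    _ = 0 := h0
  have hec : e 0 * c = 0 := by rw [← hc, hce]
  have hsum : c = c * e 0 + e 0 * c := by
    have h2 : c * e 0 + e 0 * c = m * (e 0 * e 0) - (e 0 * e 0) * m := by
      rw [hcdef]; noncomm_ring
    rw [h2, he]
  rw [hsum, hce, hec, add_zero]
end

section
/- Let A be a unital ring, let S ⊆ A be a subset whose elements pairwise commute, and let d₁, d₂ : A → A be derivations such that d₁(Comm(S)) ⊆ Comm(S) and d₂(Comm(S)) ⊆ Comm(S). Then [d₁(a), d₂(b)] = 0 for all a, b ∈ S. In particular (taking d₂ the identity-role case): if d₁(a) ∈ Comm(S) for all a ∈ S, then [d₁(a), b] = 0 for all a, b ∈ S. -/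
/-- Lemma 2.1.4 (commutativity under admissible conditions), algebraic core:
if `S ⊆ A` is pairwise commuting and `d₁, d₂` are derivations mapping the commutant
`Comm(S)` into itself, then `[d₁ a, d₂ b] = 0` for all `a, b ∈ S`; in particular,
if `d₁` maps `S` into `Comm(S)`, then `[d₁ a, b] = 0` for all `a, b ∈ S`. -/
theorem derivations_commute_on_commuting_set
    {A : Type*} [Ring A] (S : Set A)
    (hS : ∀ a ∈ S, ∀ b ∈ S, a * b = b * a)
    (d₁ d₂ : A → A)
    (hd₁_add : ∀ a b : A, d₁ (a + b) = d₁ a + d₁ b)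
    (hd₁_mul : ∀ a b : A, d₁ (a * b) = d₁ a * b + a * d₁ b)
    (hd₂_add : ∀ a b : A, d₂ (a + b) = d₂ a + d₂ b)
    (hd₂_mul : ∀ a b : A, d₂ (a * b) = d₂ a * b + a * d₂ b)
    (hd₁ : ∀ c ∈ Set.centralizer S, d₁ c ∈ Set.centralizer S)
    (hd₂ : ∀ c ∈ Set.centralizer S, d₂ c ∈ Set.centralizer S) :
    (∀ a ∈ S, ∀ b ∈ S, d₁ a * d₂ b - d₂ b * d₁ a = 0) ∧
    ((∀ a ∈ S, d₁ a ∈ Set.centralizer S) →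
      ∀ a ∈ S, ∀ b ∈ S, d₁ a * b - b * d₁ a = 0) := by
  -- S ⊆ Comm(S)
  have hSC : ∀ a ∈ S, a ∈ Set.centralizer S := fun a ha b hb => hS b hb a ha
  constructor
  · intro a ha b hb
    -- d₁ a ∈ Comm(S)
    have h1 : d₁ a ∈ Set.centralizer S := hd₁ a (hSC a ha)
    -- d₂ (d₁ a) ∈ Comm(S)
    have h2 : d₂ (d₁ a) ∈ Set.centralizer S := hd₂ _ h1
    -- d₁ a * b = b * d₁ a
    have h3 : b * d₁ a = d₁ a * b := h1 b hb
    have h4 : b * d₂ (d₁ a) = d₂ (d₁ a) * b := h2 b hb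
    have key : d₂ (d₁ a * b) = d₂ (b * d₁ a) := by rw [h3]
    rw [hd₂_mul, hd₂_mul] at key
    -- d₂(d₁ a)*b + d₁ a * d₂ b = d₂ b * d₁ a + b * d₂ (d₁ a)
    rw [h4] at key
    rw [add_comm (d₂ b * d₁ a)] at key
    rw [add_left_cancel key, sub_self]
  · intro _ a ha b hb
    have h1 : d₁ a ∈ Set.centralizer S := hd₁ a (hSC a ha)
    rw [h1 b hb, sub_self]
end

section
/- Let A be a unital ring, let S ⊆ A be a subset whose elements pairwise commute, and let m ∈ A. Then: (i) if [m,s] ∈ S for every s ∈ S, then [m,c] ∈ Comm(S) for every c ∈ Comm(S); and (ii) if [m,c] ∈ Comm(S) for every c ∈ Comm(S), then [m,s] ∈ Comm(S) for every s ∈ S. -/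
/-- Lemma 3.1.7 (hierarchy of admissible conditions on inner derivations):
for a pairwise-commuting subset `S` of a unital ring `A` and `m ∈ A`,
(i) if `[m, s] ∈ S` for every `s ∈ S`, then `[m, c] ∈ Comm(S)` for every `c ∈ Comm(S)`;
(ii) if `[m, c] ∈ Comm(S)` for every `c ∈ Comm(S)`, then `[m, s] ∈ Comm(S)` for every
`s ∈ S`. -/
theorem inner_derivation_admissible_hierarchy
    {A : Type*} [Ring A] (S : Set A)
    (hS : ∀ a ∈ S, ∀ b ∈ S, a * b = b * a) (m : A) :
    ((∀ x ∈ S, m * x - x * m ∈ S) →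
      ∀ c ∈ Set.centralizer S, m * c - c * m ∈ Set.centralizer S) ∧
    ((∀ c ∈ Set.centralizer S, m * c - c * m ∈ Set.centralizer S) →
      ∀ x ∈ S, m * x - x * m ∈ Set.centralizer S) := by
  constructor
  · intro h c hc s hs
    have h1 : (m * s - s * m) * c = c * (m * s - s * m) := hc _ (h s hs)
    have h2 : s * c = c * s := hc _ hs
    show s * (m * c - c * m) = (m * c - c * m) * s
    linear_combination (norm := noncomm_ring) -h1 + m * h2 - h2 * m
  · intro h x hx
    exact h x (fun s hs => hS s hs x hx)
end
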